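/- Let φ = ⋀_{i=1}^ℓ ⋁_{j=1}^3 l_{i,j} be a propositional 3-CNF formula over variables v_1, …, v_n. Define the ABox A_φ = {False(a), Bool(a)} ∪ {Var(v_k) | 1 ≤ k ≤ n} ∪ {clause(a, c_i) | 1 ≤ i ≤ ℓ} ∪ {pos_j(c_i, v_k) | l_{i,j} = v_k} ∪ {neg_j(c_i, v_k) | l_{i,j} = ¬v_k}, and the EL_⊥ TBox T consisting of: Bool ⊑ True; True ⊓ False ⊑ ⊥; ∃clause.False ⊑ True; Var ⊑ ∃val.Bool; ∃val.True ⊑ True; ∃val.False ⊑ False; and for every choice (X_1, X_2, X_3) with X_j ∈ {pos_j.False, neg_j.True}, the axiom ∃X_1 ⊓ ∃X_2 ⊓ ∃X_3 ⊑ False. Let ω assign weight ∞ to every axiom and assertion except Bool ⊑ True, which gets weight 1. Then φ is satisfiable if and only if (T, A_φ)_ω is 1-satisfiable. -/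

import Mathlib

namespace DL

/-! ### Syntax -/

abbrev IndName := ℕ
abbrev CName := ℕ
abbrev RName := ℕ

/-- Roles: role names and inverse roles. -/
inductive Role where
  | name : RName → Role
  | inv  : RName → Role
deriving DecidableEq

/-- `ALCHIO` concepts. -/
inductive Concept where
  | top  : Concept
  | bot  : Concept
  | atom : CName → Concept
  | nom  : IndName → Concept
  | neg  : Concept → Concept
  | conj : Concept → Concept → Concept
  | ex   : Role → Concept → Concept
deriving DecidableEq

/-- TBox axioms: concept inclusions and role inclusions. -/
inductive Axiom where
  | ci : Concept → Concept → Axiom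
  | ri : Role → Role → Axiom
deriving DecidableEq

/-- ABox assertions. -/
inductive Assertion where
  | ca : CName → IndName → Assertion
  | ra : RName → IndName → IndName → Assertion
deriving DecidableEq

/-! ### Interpretations -/

/-- A DL interpretation with domain a subset of a universe `U`.  Individual names are
interpreted via `indI` (under the standard names assumption, the individual names of the
ABox under consideration are interpreted "as themselves", i.e. injectively). -/
structure Interp (U : Type) where
  dom : Set U
  indI : IndName → U
  cI : CName → Set U
  rI : RName → Set (U × U)
  cI_sub : ∀ A, cI A ⊆ dom
  rI_sub : ∀ r p, p ∈ rI r → p.1 ∈ dom ∧ p.2 ∈ dom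

variable {U : Type}

/-- Every individual name denotes an element of the domain. -/
def Interp.Proper (I : Interp U) : Prop := ∀ a, I.indI a ∈ I.dom

def Role.interp (I : Interp U) : Role → Set (U × U)
  | Role.name r => I.rI r
  | Role.inv r  => {p | (p.2, p.1) ∈ I.rI r}

def Concept.interp (I : Interp U) : Concept → Set U
  | Concept.top => I.dom
  | Concept.bot => ∅
  | Concept.atom A => I.cI A
  | Concept.nom a => {I.indI a} ∩ I.dom
  | Concept.neg C => I.dom \ Concept.interp I C
  | Concept.conj C D => Concept.interp I C ∩ Concept.interp I D
  | Concept.ex r C => {d | ∃ e, (d, e) ∈ Role.interp I r ∧ e ∈ Concept.interp I C}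

def Assertion.sat (I : Interp U) : Assertion → Prop
  | Assertion.ca A a => I.indI a ∈ I.cI A
  | Assertion.ra r a b => (I.indI a, I.indI b) ∈ I.rI r

/-! ### Violations and cost -/

/-- Violations of a concept inclusion `C ⊑ D`. -/
def vioCI (I : Interp U) (C D : Concept) : Set U :=
  Concept.interp I C \ Concept.interp I D

/-- Violations of a role inclusion `r ⊑ s`. -/
def vioRI (I : Interp U) (r s : Role) : Set (U × U) :=
  Role.interp I r \ Role.interp I s

/-- The number of violations of an axiom. -/
noncomputable def Axiom.vioCount (I : Interp U) : Axiom → ℕ∞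
  | Axiom.ci C D => (vioCI I C D).encard
  | Axiom.ri r s => (vioRI I r s).encard

open Classical in
/-- The cost of an interpretation w.r.t. a weighted knowledge base `(T, A)` with weight
functions `wT` (on TBox axioms) and `wA` (on ABox assertions). -/
noncomputable def cost (T : Finset Axiom) (A : Finset Assertion)
    (wT : Axiom → ℕ∞) (wA : Assertion → ℕ∞) (I : Interp U) : ℕ∞ :=
  (∑ τ ∈ T, wT τ * Axiom.vioCount I τ) +
    ∑ α ∈ A, (if Assertion.sat I α then 0 else wA α)

/-! ### Queries -/

inductive Term where
  | var : ℕ → Term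
  | ind : IndName → Term
deriving DecidableEq

inductive QAtom where
  | ca : CName → Term → QAtom
  | ra : RName → Term → Term → QAtom
deriving DecidableEq

/-- A Boolean conjunctive query: a finite set of atoms, all of whose variables are
(implicitly) existentially quantified. -/
abbrev BCQ := Finset QAtom

def Term.eval (I : Interp U) (π : ℕ → U) : Term → U
  | Term.var v => π v
  | Term.ind a => I.indI a

def QAtom.sat (I : Interp U) (π : ℕ → U) : QAtom → Prop
  | QAtom.ca A t => Term.eval I π t ∈ I.cI A
  | QAtom.ra r t t' => (Term.eval I π t, Term.eval I π t') ∈ I.rI r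

/-- Satisfaction of a BCQ in an interpretation. -/
def satQ (I : Interp U) (q : BCQ) : Prop :=
  ∃ π : ℕ → U, (∀ v, π v ∈ I.dom) ∧ ∀ a ∈ q, QAtom.sat I π a

/-- An instance query is a BCQ with a single atom. -/
def IsIQ (q : BCQ) : Prop := ∃ a : QAtom, q = {a}

/-! ### Cost-based semantics -/

/-- `k`-satisfiability: some interpretation has cost at most `k`. -/
def ksat (T : Finset Axiom) (A : Finset Assertion)
    (wT : Axiom → ℕ∞) (wA : Assertion → ℕ∞) (k : ℕ) : Prop :=
  ∃ (U : Type) (I : Interp U), I.Proper ∧ cost T A wT wA I ≤ (k : ℕ∞)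

/-- `K ⊨ₚᵏ q`: some interpretation of cost at most `k` satisfies `q`. -/
def satP (T : Finset Axiom) (A : Finset Assertion)
    (wT : Axiom → ℕ∞) (wA : Assertion → ℕ∞) (k : ℕ) (q : BCQ) : Prop :=
  ∃ (U : Type) (I : Interp U), I.Proper ∧ cost T A wT wA I ≤ (k : ℕ∞) ∧ satQ I q

/-- `K ⊨꜀ᵏ q`: every interpretation of cost at most `k` satisfies `q`. -/
def satC (T : Finset Axiom) (A : Finset Assertion)
    (wT : Axiom → ℕ∞) (wA : Assertion → ℕ∞) (k : ℕ) (q : BCQ) : Prop :=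
  ∀ (U : Type) (I : Interp U), I.Proper → cost T A wT wA I ≤ (k : ℕ∞) → satQ I q

/-- The optimal cost of a weighted knowledge base. -/
noncomputable def optCost (T : Finset Axiom) (A : Finset Assertion)
    (wT : Axiom → ℕ∞) (wA : Assertion → ℕ∞) : ℕ∞ :=
  sInf {c : ℕ∞ | ∃ (U : Type) (I : Interp U), I.Proper ∧ cost T A wT wA I = c}

/-- `K ⊨ₚᵒᵖᵗ q`: some interpretation of optimal cost satisfies `q`. -/
noncomputable def satPopt (T : Finset Axiom) (A : Finset Assertion)
    (wT : Axiom → ℕ∞) (wA : Assertion → ℕ∞) (q : BCQ) : Prop :=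
  ∃ (U : Type) (I : Interp U), I.Proper ∧ cost T A wT wA I = optCost T A wT wA ∧ satQ I q

/-- `K ⊨꜀ᵒᵖᵗ q`: every interpretation of optimal cost satisfies `q`. -/
noncomputable def satCopt (T : Finset Axiom) (A : Finset Assertion)
    (wT : Axiom → ℕ∞) (wA : Assertion → ℕ∞) (q : BCQ) : Prop :=
  ∀ (U : Type) (I : Interp U), I.Proper → cost T A wT wA I = optCost T A wT wA → satQ I q

/-! ### Occurrences of symbols -/

def Role.base : Role → RName
  | Role.name r => r
  | Role.inv r => r

def Concept.cnames : Concept → Finset CName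
  | Concept.atom A => {A}
  | Concept.neg C => C.cnames
  | Concept.conj C D => C.cnames ∪ D.cnames
  | Concept.ex _ C => C.cnames
  | _ => ∅

def Concept.rnames : Concept → Finset RName
  | Concept.neg C => C.rnames
  | Concept.conj C D => C.rnames ∪ D.rnames
  | Concept.ex r C => insert r.base C.rnames
  | _ => ∅

def Concept.indNames : Concept → Finset IndName
  | Concept.nom a => {a}
  | Concept.neg C => C.indNames
  | Concept.conj C D => C.indNames ∪ D.indNames
  | Concept.ex _ C => C.indNames
  | _ => ∅

def Axiom.cnames : Axiom → Finset CName
  | Axiom.ci C D => C.cnames ∪ D.cnames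
  | Axiom.ri _ _ => ∅

def Axiom.rnames : Axiom → Finset RName
  | Axiom.ci C D => C.rnames ∪ D.rnames
  | Axiom.ri r s => {r.base, s.base}

def Axiom.indNames : Axiom → Finset IndName
  | Axiom.ci C D => C.indNames ∪ D.indNames
  | Axiom.ri _ _ => ∅

def Assertion.cnames : Assertion → Finset CName
  | Assertion.ca A _ => {A}
  | Assertion.ra _ _ _ => ∅

def Assertion.rnames : Assertion → Finset RName
  | Assertion.ca _ _ => ∅
  | Assertion.ra r _ _ => {r}

def Assertion.indNames : Assertion → Finset IndName
  | Assertion.ca _ a => {a}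
  | Assertion.ra _ a b => {a, b}

/-- The individual names occurring in an ABox. -/
def aboxInds (A : Finset Assertion) : Finset IndName := A.biUnion Assertion.indNames

/-- The individual names occurring in a KB. -/
def kbInds (T : Finset Axiom) (A : Finset Assertion) : Finset IndName :=
  T.biUnion Axiom.indNames ∪ aboxInds A

def Term.indNames : Term → Finset IndName
  | Term.var _ => ∅
  | Term.ind a => {a}

def QAtom.indNames : QAtom → Finset IndName
  | QAtom.ca _ t => t.indNames
  | QAtom.ra _ t t' => t.indNames ∪ t'.indNames

def QAtom.cnames : QAtom → Finset CName
  | QAtom.ca A _ => {A}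
  | QAtom.ra _ _ _ => ∅

def qInds (q : BCQ) : Finset IndName := q.biUnion QAtom.indNames

def qCnames (q : BCQ) : Finset CName := q.biUnion QAtom.cnames

/-! ### Sizes -/

def Concept.size : Concept → ℕ
  | Concept.top => 1
  | Concept.bot => 1
  | Concept.atom _ => 1
  | Concept.nom _ => 1
  | Concept.neg C => C.size + 1
  | Concept.conj C D => C.size + D.size + 1
  | Concept.ex _ C => C.size + 2

def Axiom.size : Axiom → ℕ
  | Axiom.ci C D => C.size + D.size + 1
  | Axiom.ri _ _ => 3

def Assertion.size : Assertion → ℕ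
  | Assertion.ca _ _ => 2
  | Assertion.ra _ _ _ => 3

def tboxSize (T : Finset Axiom) : ℕ := ∑ τ ∈ T, τ.size

def aboxSize (A : Finset Assertion) : ℕ := ∑ α ∈ A, α.size

/-! ### DL-Lite fragments -/

/-- Basic concepts: concept names and unqualified existential restrictions `∃r` (with a
possibly inverse role `r`), the latter rendered as `∃r.⊤`. -/
inductive IsBasic : Concept → Prop
  | atom (A : CName) : IsBasic (Concept.atom A)
  | ex (r : Role) : IsBasic (Concept.ex r Concept.top)

/-- A `DL-Lite_core` axiom: `B ⊑ C` or `B ⊓ C ⊑ ⊥` with `B, C` basic concepts. -/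
def IsCoreAxiom (τ : Axiom) : Prop :=
  (∃ B C, τ = Axiom.ci B C ∧ IsBasic B ∧ IsBasic C) ∨
  (∃ B C, τ = Axiom.ci (Concept.conj B C) Concept.bot ∧ IsBasic B ∧ IsBasic C)

def IsDLLiteCore (T : Finset Axiom) : Prop := ∀ τ ∈ T, IsCoreAxiom τ

/-- Concepts built from basic concepts using `¬`, `⊓` (and hence also `⊔`). -/
inductive IsBoolConcept : Concept → Prop
  | basic {C} : IsBasic C → IsBoolConcept C
  | neg {C} : IsBoolConcept C → IsBoolConcept (Concept.neg C)
  | conj {C D} : IsBoolConcept C → IsBoolConcept D → IsBoolConcept (Concept.conj C D)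

/-- A `DL-Lite_bool^H` axiom: a concept inclusion between Boolean combinations of basic
concepts, or a role inclusion. -/
def IsBoolHAxiom (τ : Axiom) : Prop :=
  (∃ C D, τ = Axiom.ci C D ∧ IsBoolConcept C ∧ IsBoolConcept D) ∨ (∃ r s, τ = Axiom.ri r s)

def IsDLLiteBoolH (T : Finset Axiom) : Prop := ∀ τ ∈ T, IsBoolHAxiom τ

/-! Encoding of a 3-CNF formula `φ = ⋀_{i<ℓ} ⋁_{j<3} l_{i,j}` over variables `v_0,…,v_{n-1}`:
`φ i j = (b, v)` where `b = true` iff the `j`-th literal of the `i`-th clause is the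
positive literal `v` (and `b = false` iff it is `¬v`). -/

/-- concept names -/
def cFalse : CName := 0
def cBool : CName := 1
def cTrue : CName := 2
def cVar : CName := 3

/-- role names -/
def rClause : RName := 0
def rVal : RName := 1
def rPos (j : Fin 3) : RName := 2 + (j : ℕ)
def rNeg (j : Fin 3) : RName := 5 + (j : ℕ)

/-- individual names -/
def aN : IndName := 0
def vN (n : ℕ) (k : Fin n) : IndName := 1 + (k : ℕ)
def cN (n ℓ : ℕ) (i : Fin ℓ) : IndName := 1 + n + (i : ℕ)

/-- The ABox `A_φ`. -/
def cnfAbox (ℓ n : ℕ) (φ : Fin ℓ → Fin 3 → Bool × Fin n) : Finset Assertion :=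
  {Assertion.ca cFalse aN, Assertion.ca cBool aN} ∪
  (Finset.univ.image fun k : Fin n => Assertion.ca cVar (vN n k)) ∪
  (Finset.univ.image fun i : Fin ℓ => Assertion.ra rClause aN (cN n ℓ i)) ∪
  (Finset.univ.image fun p : Fin ℓ × Fin 3 =>
    if (φ p.1 p.2).1 then Assertion.ra (rPos p.2) (cN n ℓ p.1) (vN n (φ p.1 p.2).2)
    else Assertion.ra (rNeg p.2) (cN n ℓ p.1) (vN n (φ p.1 p.2).2))

/-- `X_j ∈ {∃pos_j.False, ∃neg_j.True}` according to the choice `f j`. -/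
def comboCNF (f : Fin 3 → Bool) (j : Fin 3) : Concept :=
  if f j then Concept.ex (Role.name (rPos j)) (Concept.atom cFalse)
  else Concept.ex (Role.name (rNeg j)) (Concept.atom cTrue)

/-- The `EL_⊥` TBox `T`. -/
def cnfTbox : Finset Axiom :=
  {Axiom.ci (Concept.atom cBool) (Concept.atom cTrue),
   Axiom.ci (Concept.conj (Concept.atom cTrue) (Concept.atom cFalse)) Concept.bot,
   Axiom.ci (Concept.ex (Role.name rClause) (Concept.atom cFalse)) (Concept.atom cTrue),
   Axiom.ci (Concept.atom cVar) (Concept.ex (Role.name rVal) (Concept.atom cBool)),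
   Axiom.ci (Concept.ex (Role.name rVal) (Concept.atom cTrue)) (Concept.atom cTrue),
   Axiom.ci (Concept.ex (Role.name rVal) (Concept.atom cFalse)) (Concept.atom cFalse)} ∪
  (Finset.univ.image fun f : Fin 3 → Bool =>
    Axiom.ci (Concept.conj (Concept.conj (comboCNF f 0) (comboCNF f 1)) (comboCNF f 2))
      (Concept.atom cFalse))


/-! ### Auxiliary material for Statement 11 -/

section Statement11Aux

open Classical

/-- clause edges -/
def clauseEdges (ℓ n : ℕ) : Set (ℕ × ℕ) := {p | ∃ i : Fin ℓ, p = (0, 1 + n + (i : ℕ))}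

/-- val edges -/
def valEdges (ℓ n : ℕ) (ν : Fin n → Bool) : Set (ℕ × ℕ) :=
  {p | ∃ k : Fin n, p = (1 + (k : ℕ), if ν k then 1 + n + ℓ else 0)}

def posEdges {ℓ n : ℕ} (φ : Fin ℓ → Fin 3 → Bool × Fin n) (j : Fin 3) : Set (ℕ × ℕ) :=
  {p | ∃ i : Fin ℓ, (φ i j).1 = true ∧ p = (1 + n + (i : ℕ), 1 + ((φ i j).2 : ℕ))}

def negEdges {ℓ n : ℕ} (φ : Fin ℓ → Fin 3 → Bool × Fin n) (j : Fin 3) : Set (ℕ × ℕ) :=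
  {p | ∃ i : Fin ℓ, (φ i j).1 = false ∧ p = (1 + n + (i : ℕ), 1 + ((φ i j).2 : ℕ))}

def modelCI (ℓ n : ℕ) (ν : Fin n → Bool) : CName → Set ℕ
  | 0 => {x | x = 0 ∨ ∃ k : Fin n, ν k = false ∧ x = 1 + (k : ℕ)}
  | 1 => {x | x = 0 ∨ x = 1 + n + ℓ}
  | 2 => {x | x = 1 + n + ℓ ∨ ∃ k : Fin n, ν k = true ∧ x = 1 + (k : ℕ)}
  | 3 => {x | ∃ k : Fin n, x = 1 + (k : ℕ)}
  | _ => ∅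

def modelRI (ℓ n : ℕ) (φ : Fin ℓ → Fin 3 → Bool × Fin n) (ν : Fin n → Bool) :
    RName → Set (ℕ × ℕ)
  | 0 => clauseEdges ℓ n
  | 1 => valEdges ℓ n ν
  | 2 => posEdges φ 0
  | 3 => posEdges φ 1
  | 4 => posEdges φ 2
  | 5 => negEdges φ 0
  | 6 => negEdges φ 1
  | 7 => negEdges φ 2
  | _ => ∅

lemma modelRI_pos (ℓ n : ℕ) (φ : Fin ℓ → Fin 3 → Bool × Fin n) (ν : Fin n → Bool)
    (j : Fin 3) : modelRI ℓ n φ ν (rPos j) = posEdges φ j := by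
  fin_cases j <;> rfl

lemma modelRI_neg (ℓ n : ℕ) (φ : Fin ℓ → Fin 3 → Bool × Fin n) (ν : Fin n → Bool)
    (j : Fin 3) : modelRI ℓ n φ ν (rNeg j) = negEdges φ j := by
  fin_cases j <;> rfl

def modelI (ℓ n : ℕ) (φ : Fin ℓ → Fin 3 → Bool × Fin n) (ν : Fin n → Bool) : Interp ℕ where
  dom := Set.univ
  indI := id
  cI := modelCI ℓ n ν
  rI := modelRI ℓ n φ ν
  cI_sub := fun _ => Set.subset_univ _
  rI_sub := fun _ _ _ => ⟨trivial, trivial⟩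

end Statement11Aux


section Statement11Fwd

variable {ℓ n : ℕ} (φ : Fin ℓ → Fin 3 → Bool × Fin n) (ν : Fin n → Bool)

lemma model_sat_abox (α : Assertion) (hα : α ∈ cnfAbox ℓ n φ) :
    Assertion.sat (modelI ℓ n φ ν) α := by
  simp only [cnfAbox, Finset.mem_union, Finset.mem_image, Finset.mem_insert,
    Finset.mem_singleton, Finset.mem_univ, true_and] at hα
  rcases hα with (((h | h) | ⟨k, h⟩) | ⟨i, h⟩) | ⟨⟨i, j⟩, h⟩
  · subst h; exact Or.inl rfl
  · subst h; exact Or.inl rfl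
  · subst h; exact ⟨k, rfl⟩
  · subst h; exact ⟨i, rfl⟩
  · by_cases hb : (φ i j).1 = true
    · rw [if_pos hb] at h; subst h
      show _ ∈ modelRI ℓ n φ ν (rPos j)
      rw [modelRI_pos]; exact ⟨i, hb, rfl⟩
    · rw [if_neg hb] at h; subst h
      show _ ∈ modelRI ℓ n φ ν (rNeg j)
      rw [modelRI_neg]; exact ⟨i, Bool.eq_false_iff.mpr hb, rfl⟩

lemma model_tf :
    Concept.interp (modelI ℓ n φ ν)
      (Concept.conj (Concept.atom cTrue) (Concept.atom cFalse)) ⊆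
    Concept.interp (modelI ℓ n φ ν) Concept.bot := by
  rintro x ⟨hT, hF⟩
  rcases hT with h1 | ⟨k, hk, h1⟩ <;> rcases hF with h2 | ⟨k', hk', h2⟩
  · subst h1; omega
  · subst h1; have := k'.isLt; omega
  · subst h1; have := k.isLt; omega
  · subst h1
    have : k = k' := by
      have := h2; exact Fin.ext (by omega)
    rw [this, hk'] at hk; exact absurd hk (by simp)

lemma model_clauseFalse :
    Concept.interp (modelI ℓ n φ ν)
      (Concept.ex (Role.name rClause) (Concept.atom cFalse)) ⊆
    Concept.interp (modelI ℓ n φ ν) (Concept.atom cTrue) := by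
  rintro x ⟨e, he, hF⟩
  rcases he with ⟨i, he⟩
  have he2 : e = 1 + n + (i : ℕ) := congrArg Prod.snd he
  rcases hF with h | ⟨k, _, h⟩
  · omega
  · have := k.isLt; omega

lemma model_var :
    Concept.interp (modelI ℓ n φ ν) (Concept.atom cVar) ⊆
    Concept.interp (modelI ℓ n φ ν)
      (Concept.ex (Role.name rVal) (Concept.atom cBool)) := by
  rintro x ⟨k, hk⟩
  refine ⟨if ν k then 1 + n + ℓ else 0, ⟨k, by rw [hk]⟩, ?_⟩
  by_cases h : ν k
  · rw [if_pos h]; exact Or.inr rfl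
  · rw [if_neg h]; exact Or.inl rfl

lemma model_valTrue :
    Concept.interp (modelI ℓ n φ ν)
      (Concept.ex (Role.name rVal) (Concept.atom cTrue)) ⊆
    Concept.interp (modelI ℓ n φ ν) (Concept.atom cTrue) := by
  rintro x ⟨e, ⟨k, he⟩, hT⟩
  have hx : x = 1 + (k : ℕ) := congrArg Prod.fst he
  have he2 : e = if ν k then 1 + n + ℓ else 0 := congrArg Prod.snd he
  by_cases h : ν k
  · exact Or.inr ⟨k, h, hx⟩
  · rw [if_neg h] at he2
    rcases hT with h2 | ⟨k', _, h2⟩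
    · omega
    · omega

lemma model_valFalse :
    Concept.interp (modelI ℓ n φ ν)
      (Concept.ex (Role.name rVal) (Concept.atom cFalse)) ⊆
    Concept.interp (modelI ℓ n φ ν) (Concept.atom cFalse) := by
  rintro x ⟨e, ⟨k, he⟩, hF⟩
  have hx : x = 1 + (k : ℕ) := congrArg Prod.fst he
  have he2 : e = if ν k then 1 + n + ℓ else 0 := congrArg Prod.snd he
  by_cases h : ν k
  · rw [if_pos h] at he2
    rcases hF with h2 | ⟨k', _, h2⟩
    · omega
    · have := k'.isLt; omega
  · exact Or.inr ⟨k, Bool.eq_false_iff.mpr h, hx⟩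

lemma model_combo (hν : ∀ i : Fin ℓ, ∃ j : Fin 3, ν (φ i j).2 = (φ i j).1)
    (f : Fin 3 → Bool) :
    Concept.interp (modelI ℓ n φ ν)
      (Concept.conj (Concept.conj (comboCNF f 0) (comboCNF f 1)) (comboCNF f 2)) ⊆
    Concept.interp (modelI ℓ n φ ν) (Concept.atom cFalse) := by
  rintro x ⟨⟨h0, h1⟩, h2⟩
  -- from h0, x = 1 + n + i for some i
  have hx : ∃ i : Fin ℓ, x = 1 + n + (i : ℕ) := by
    unfold comboCNF at h0
    by_cases hf : f 0
    · rw [if_pos hf] at h0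
      rcases h0 with ⟨e, he, -⟩
      have he' : (x, e) ∈ posEdges φ 0 := by rw [← modelRI_pos ℓ n φ ν 0]; exact he
      rcases he' with ⟨i, -, he⟩
      exact ⟨i, congrArg Prod.fst he⟩
    · rw [if_neg hf] at h0
      rcases h0 with ⟨e, he, -⟩
      have he' : (x, e) ∈ negEdges φ 0 := by rw [← modelRI_neg ℓ n φ ν 0]; exact he
      rcases he' with ⟨i, -, he⟩
      exact ⟨i, congrArg Prod.fst he⟩
  rcases hx with ⟨i, hx⟩
  obtain ⟨j, hj⟩ := hν i
  exfalso
  have hmem : x ∈ Concept.interp (modelI ℓ n φ ν) (comboCNF f j) := by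
    fin_cases j
    · exact h0
    · exact h1
    · exact h2
  unfold comboCNF at hmem
  by_cases hf : f j
  · rw [if_pos hf] at hmem
    rcases hmem with ⟨e, he, hF⟩
    have he' : (x, e) ∈ posEdges φ j := by rw [← modelRI_pos ℓ n φ ν j]; exact he
    rcases he' with ⟨i', hpos, he⟩
    have hx' : x = 1 + n + (i' : ℕ) := congrArg Prod.fst he
    have hii : i' = i := Fin.ext (by omega)
    subst hii
    have he2 : e = 1 + ((φ i' j).2 : ℕ) := congrArg Prod.snd he
    rcases hF with h | ⟨k', hk', h⟩
    · omega
    · have : (φ i' j).2 = k' := Fin.ext (by omega)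
      rw [hpos, this] at hj
      rw [hj] at hk'; exact absurd hk' (by simp)
  · rw [if_neg hf] at hmem
    rcases hmem with ⟨e, he, hT⟩
    have he' : (x, e) ∈ negEdges φ j := by rw [← modelRI_neg ℓ n φ ν j]; exact he
    rcases he' with ⟨i', hneg, he⟩
    have hx' : x = 1 + n + (i' : ℕ) := congrArg Prod.fst he
    have hii : i' = i := Fin.ext (by omega)
    subst hii
    have he2 : e = 1 + ((φ i' j).2 : ℕ) := congrArg Prod.snd he
    rcases hT with h | ⟨k', hk', h⟩
    · have := (φ i' j).2.isLt; omega
    · have : (φ i' j).2 = k' := Fin.ext (by omega)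
      rw [hneg, this] at hj
      rw [hj] at hk'; exact absurd hk'.symm (by simp)

lemma model_bool_vio :
    vioCI (modelI ℓ n φ ν) (Concept.atom cBool) (Concept.atom cTrue) = {0} := by
  ext x
  constructor
  · rintro ⟨h1 | h1, h2⟩
    · exact h1
    · exfalso; exact h2 (Or.inl h1)
  · rintro rfl
    refine ⟨Or.inl rfl, ?_⟩
    rintro (h | ⟨k, _, h⟩)
    · omega
    · omega

end Statement11Fwd


section Statement11Bwd

open Classical in
lemma cost_le_parts {U : Type} (T : Finset Axiom) (A : Finset Assertion)
    (wT : Axiom → ℕ∞) (wA : Assertion → ℕ∞) (I : Interp U) {k : ℕ∞}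
    (h : cost T A wT wA I ≤ k) :
    (∀ τ ∈ T, wT τ * Axiom.vioCount I τ ≤ k) ∧
    (∀ α ∈ A, ¬ Assertion.sat I α → wA α ≤ k) := by
  unfold cost at h
  have h1 : (∑ τ ∈ T, wT τ * Axiom.vioCount I τ) ≤ k := le_trans le_self_add h
  have h2 : (∑ α ∈ A, if Assertion.sat I α then 0 else wA α) ≤ k := le_trans le_add_self h
  constructor
  · intro τ hτ
    exact le_trans (Finset.single_le_sum (f := fun τ => wT τ * Axiom.vioCount I τ)
      (fun _ _ => zero_le) hτ) h1
  · intro α hα hns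
    have h3 := Finset.single_le_sum
      (f := fun α => if Assertion.sat I α then 0 else wA α) (fun _ _ => zero_le) hα
    rw [if_neg hns] at h3
    exact le_trans h3 h2

lemma eq_zero_of_top_mul_le_one {v : ℕ∞} (h : (⊤ : ℕ∞) * v ≤ 1) : v = 0 := by
  by_contra hv
  rw [ENat.top_mul hv] at h
  exact absurd (top_le_iff.mp h).symm (by decide)

end Statement11Bwd

/-- A 3-CNF formula `φ` is satisfiable iff the `EL_⊥` WKB
`(T, A_φ)_ω` is `1`-satisfiable, where `ω` assigns `∞` to every axiom and assertion
except `Bool ⊑ True`, which gets weight `1`. -/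
theorem statement11 (ℓ n : ℕ) (φ : Fin ℓ → Fin 3 → Bool × Fin n) :
    (∃ ν : Fin n → Bool, ∀ i : Fin ℓ, ∃ j : Fin 3, ν (φ i j).2 = (φ i j).1) ↔
      ksat cnfTbox (cnfAbox ℓ n φ)
        (fun τ => if τ = Axiom.ci (Concept.atom cBool) (Concept.atom cTrue) then 1 else ⊤)
        (fun _ => ⊤) 1 := by
  classical
  set β : Axiom := Axiom.ci (Concept.atom cBool) (Concept.atom cTrue) with hβdef
  constructor
  · rintro ⟨ν, hν⟩
    refine ⟨ℕ, modelI ℓ n φ ν, fun a => trivial, ?_⟩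
    set I := modelI ℓ n φ ν with hI
    have h2 : (∑ α ∈ cnfAbox ℓ n φ,
        if Assertion.sat I α then 0 else (⊤ : ℕ∞)) = 0 :=
      Finset.sum_eq_zero fun α hα => if_pos (model_sat_abox φ ν α hα)
    have hβmem : β ∈ cnfTbox := by
      rw [hβdef]
      exact Finset.mem_union_left _ (by simp)
    have h1 : (∑ τ ∈ cnfTbox,
        (if τ = β then (1 : ℕ∞) else ⊤) * Axiom.vioCount I τ) = 1 := by
      rw [Finset.sum_eq_single_of_mem β hβmem ?_]
      · rw [if_pos rfl, one_mul, hβdef]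
        show (vioCI I (Concept.atom cBool) (Concept.atom cTrue)).encard = 1
        rw [model_bool_vio]
        exact Set.encard_singleton 0
      · intro b hb hbne
        have hvio : Axiom.vioCount I b = 0 := by
          simp only [cnfTbox, Finset.mem_union, Finset.mem_insert, Finset.mem_singleton,
            Finset.mem_image, Finset.mem_univ, true_and] at hb
          rcases hb with ((h | h | h | h | h | h) | ⟨f, h⟩)
          · exact absurd h hbne
          · subst h
            exact Set.encard_eq_zero.mpr (Set.diff_eq_empty.mpr (model_tf φ ν))
          · subst h
            exact Set.encard_eq_zero.mpr (Set.diff_eq_empty.mpr (model_clauseFalse φ ν))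
          · subst h
            exact Set.encard_eq_zero.mpr (Set.diff_eq_empty.mpr (model_var φ ν))
          · subst h
            exact Set.encard_eq_zero.mpr (Set.diff_eq_empty.mpr (model_valTrue φ ν))
          · subst h
            exact Set.encard_eq_zero.mpr (Set.diff_eq_empty.mpr (model_valFalse φ ν))
          · rw [← h]
            exact Set.encard_eq_zero.mpr (Set.diff_eq_empty.mpr (model_combo φ ν hν f))
        rw [hvio, mul_zero]
    show cost _ _ _ _ I ≤ _
    unfold cost
    rw [h1, h2, add_zero]
    exact_mod_cast le_refl (1 : ℕ∞)
  · rintro ⟨U, I, hP, hcost⟩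
    obtain ⟨hTle, hAle⟩ := cost_le_parts _ _ _ _ I hcost
    have hA : ∀ α ∈ cnfAbox ℓ n φ, Assertion.sat I α := by
      intro α hα
      by_contra hns
      exact absurd (top_le_iff.mp (hAle α hα hns)).symm (by decide)
    have hsub : ∀ C D, Axiom.ci C D ∈ cnfTbox → Axiom.ci C D ≠ β →
        Concept.interp I C ⊆ Concept.interp I D := by
      intro C D hmem hne
      have h0 := hTle _ hmem
      rw [if_neg hne] at h0
      have := eq_zero_of_top_mul_le_one h0
      exact Set.diff_eq_empty.mp (Set.encard_eq_zero.mp this)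
    have hβle : (I.cI cBool \ I.cI cTrue).encard ≤ 1 := by
      have hβmem : β ∈ cnfTbox := by
        rw [hβdef]
        exact Finset.mem_union_left _ (by simp)
      have h0 := hTle β hβmem
      rw [if_pos rfl, one_mul] at h0
      exact h0
    -- ABox facts
    have hFa : I.indI aN ∈ I.cI cFalse :=
      hA _ (Finset.mem_union_left _ (Finset.mem_union_left _ (Finset.mem_union_left _
        (Finset.mem_insert_self _ _))))
    have hBa : I.indI aN ∈ I.cI cBool :=
      hA _ (Finset.mem_union_left _ (Finset.mem_union_left _ (Finset.mem_union_left _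
        (Finset.mem_insert_of_mem (Finset.mem_singleton_self _)))))
    have hVar : ∀ k : Fin n, I.indI (vN n k) ∈ I.cI cVar := fun k =>
      hA _ (Finset.mem_union_left _ (Finset.mem_union_left _ (Finset.mem_union_right _
        (Finset.mem_image_of_mem _ (Finset.mem_univ k)))))
    have hClauseE : ∀ i : Fin ℓ, (I.indI aN, I.indI (cN n ℓ i)) ∈ I.rI rClause := fun i =>
      hA _ (Finset.mem_union_left _ (Finset.mem_union_right _
        (Finset.mem_image_of_mem _ (Finset.mem_univ i))))
    have hEdge : ∀ (i : Fin ℓ) (j : Fin 3), Assertion.sat I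
        (if (φ i j).1 = true then Assertion.ra (rPos j) (cN n ℓ i) (vN n (φ i j).2)
         else Assertion.ra (rNeg j) (cN n ℓ i) (vN n (φ i j).2)) := fun i j =>
      hA _ (Finset.mem_union_right _ (Finset.mem_image_of_mem _ (Finset.mem_univ (i, j))))
    -- TBox facts
    have hTFsub := hsub _ _ (Finset.mem_union_left _ (by simp [cnfTbox]))
      (show Axiom.ci (Concept.conj (Concept.atom cTrue) (Concept.atom cFalse)) Concept.bot
        ≠ β by rw [hβdef]; simp)
    have hClauseSub := hsub _ _ (Finset.mem_union_left _ (by simp [cnfTbox]))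
      (show Axiom.ci (Concept.ex (Role.name rClause) (Concept.atom cFalse))
        (Concept.atom cTrue) ≠ β by rw [hβdef]; simp)
    have hVarSub := hsub _ _ (Finset.mem_union_left _ (by simp [cnfTbox]))
      (show Axiom.ci (Concept.atom cVar)
        (Concept.ex (Role.name rVal) (Concept.atom cBool)) ≠ β by
        rw [hβdef]; simp [cVar, cBool])
    have hValTrueSub := hsub _ _ (Finset.mem_union_left _ (by simp [cnfTbox]))
      (show Axiom.ci (Concept.ex (Role.name rVal) (Concept.atom cTrue))
        (Concept.atom cTrue) ≠ β by rw [hβdef]; simp)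
    have hValFalseSub := hsub _ _ (Finset.mem_union_left _ (by simp [cnfTbox]))
      (show Axiom.ci (Concept.ex (Role.name rVal) (Concept.atom cFalse))
        (Concept.atom cFalse) ≠ β by rw [hβdef]; simp)
    have hComboSub : ∀ f : Fin 3 → Bool,
        Concept.interp I (Concept.conj (Concept.conj (comboCNF f 0) (comboCNF f 1))
          (comboCNF f 2)) ⊆ Concept.interp I (Concept.atom cFalse) := fun f =>
      hsub _ _ (Finset.mem_union_right _ (Finset.mem_image_of_mem _ (Finset.mem_univ f)))
        (by rw [hβdef]; simp)
    have haT : I.indI aN ∉ I.cI cTrue := fun h => hTFsub ⟨h, hFa⟩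
    have hBTone : ∀ x ∈ I.cI cBool, x ∉ I.cI cTrue → x = I.indI aN := fun x hxB hxT =>
      Set.encard_le_one_iff.mp hβle x (I.indI aN) ⟨hxB, hxT⟩ ⟨hBa, haT⟩
    let ν : Fin n → Bool := fun k => decide (I.indI (vN n k) ∈ I.cI cTrue)
    have hLfalse : ∀ k : Fin n, I.indI (vN n k) ∉ I.cI cTrue →
        I.indI (vN n k) ∈ I.cI cFalse := by
      intro k hkT
      rcases hVarSub (hVar k) with ⟨e, he, heB⟩
      by_cases heT : e ∈ I.cI cTrue
      · exact absurd (hValTrueSub ⟨e, he, heT⟩) hkT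
      · have heq : e = I.indI aN := hBTone e heB heT
        exact hValFalseSub ⟨e, he, by rw [heq]; exact hFa⟩
    refine ⟨ν, fun i => ?_⟩
    by_contra hno
    push_neg at hno
    set f : Fin 3 → Bool := fun j => (φ i j).1 with hf
    have hcj : ∀ j : Fin 3, I.indI (cN n ℓ i) ∈ Concept.interp I (comboCNF f j) := by
      intro j
      have hedge := hEdge i j
      unfold comboCNF
      by_cases hb : (φ i j).1 = true
      · rw [if_pos (show f j = true from hb)]
        rw [if_pos hb] at hedge
        refine ⟨I.indI (vN n (φ i j).2), hedge, ?_⟩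
        apply hLfalse
        intro hmem
        exact hno j ((decide_eq_true hmem).trans hb.symm)
      · rw [if_neg (show ¬ f j = true from hb)]
        rw [if_neg hb] at hedge
        refine ⟨I.indI (vN n (φ i j).2), hedge, ?_⟩
        have hbf : (φ i j).1 = false := Bool.eq_false_iff.mpr hb
        have hne : ν (φ i j).2 ≠ false := by rw [← hbf]; exact hno j
        rcases Bool.eq_false_or_eq_true (ν (φ i j).2) with h | h
        · exact of_decide_eq_true h
        · exact absurd h hne
    have hcF : I.indI (cN n ℓ i) ∈ I.cI cFalse :=
      hComboSub f ⟨⟨hcj 0, hcj 1⟩, hcj 2⟩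
    exact haT (hClauseSub ⟨I.indI (cN n ℓ i), hClauseE i, hcF⟩)


end DL
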